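/- Let α ≥ 0 and let P ∈ L¹([0,1]; ℝⁿ). Then ∫_0^1 |∫_s^1 e^{−αu} P_u du|² ds ≤ 2(1 + α²) ∫_0^1 |∫_s^1 P_v dv|² ds. -/

import Mathlib

open MeasureTheory Real Set

variable {E : Type*} [NormedAddCommGroup E] [NormedSpace ℝ E] [CompleteSpace E]

lemma tri_swap (s : ℝ) (hs : s ≤ 1) (g : ℝ → ℝ) (hg : Continuous g)
    (P : ℝ → E) (hP : IntegrableOn P (Set.Ioc s 1)) :
    ∫ u in s..1, g u • (∫ v in u..(1:ℝ), P v) =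
      ∫ v in Set.Ioc s 1, (∫ u in s..v, g u) • P v := by
  set μ := volume.restrict (Set.Ioc s 1) with hμ
  have hSmeas : MeasurableSet {p : ℝ × ℝ | p.1 < p.2} :=
    measurableSet_lt measurable_fst measurable_snd
  have hgint : Integrable g μ := hg.integrableOn_Ioc
  have hInt : Integrable (fun z : ℝ × ℝ =>
      ({p : ℝ × ℝ | p.1 < p.2}).indicator (fun p => g p.1 • P p.2) z) (μ.prod μ) :=
    (hgint.smul_prod hP).indicator hSmeas
  have key := MeasureTheory.integral_integral_swap
    (f := fun u v => ({p : ℝ × ℝ | p.1 < p.2}).indicator (fun p => g p.1 • P p.2) (u, v))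
    (μ := μ) (ν := μ) hInt
  have hL : (∫ u, (∫ v, ({p : ℝ × ℝ | p.1 < p.2}).indicator (fun p => g p.1 • P p.2) (u, v) ∂μ) ∂μ)
      = ∫ u in s..1, g u • (∫ v in u..(1:ℝ), P v) := by
    rw [intervalIntegral.integral_of_le hs]
    refine setIntegral_congr_fun measurableSet_Ioc (fun u hu => ?_)
    have h1 : (fun v => ({p : ℝ × ℝ | p.1 < p.2}).indicator (fun p => g p.1 • P p.2) (u, v))
        = (Set.Ioi u).indicator (fun v => g u • P v) := by
      funext v
      by_cases h : u < v <;> simp [Set.indicator_apply, h]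
    rw [h1, MeasureTheory.integral_indicator measurableSet_Ioi, hμ,
      Measure.restrict_restrict measurableSet_Ioi]
    have h2 : Set.Ioi u ∩ Set.Ioc s 1 = Set.Ioc u 1 := by
      ext x
      simp only [mem_inter_iff, mem_Ioi, mem_Ioc]
      exact ⟨fun ⟨a, _, c⟩ => ⟨a, c⟩, fun ⟨a, c⟩ => ⟨a, lt_trans hu.1 a, c⟩⟩
    rw [h2, MeasureTheory.integral_smul, ← intervalIntegral.integral_of_le hu.2]
  have hR : (∫ v, (∫ u, ({p : ℝ × ℝ | p.1 < p.2}).indicator (fun p => g p.1 • P p.2) (u, v) ∂μ) ∂μ)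
      = ∫ v in Set.Ioc s 1, (∫ u in s..v, g u) • P v := by
    refine setIntegral_congr_fun measurableSet_Ioc (fun v hv => ?_)
    have h1 : (fun u => ({p : ℝ × ℝ | p.1 < p.2}).indicator (fun p => g p.1 • P p.2) (u, v))
        = (Set.Iio v).indicator (fun u => g u • P v) := by
      funext u
      by_cases h : u < v <;> simp [Set.indicator_apply, h]
    rw [h1, MeasureTheory.integral_indicator measurableSet_Iio, hμ,
      Measure.restrict_restrict measurableSet_Iio]
    have h2 : Set.Iio v ∩ Set.Ioc s 1 = Set.Ioo s v := by
      ext x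
      simp only [mem_inter_iff, mem_Iio, mem_Ioo, mem_Ioc]
      exact ⟨fun ⟨a, b, _⟩ => ⟨b, a⟩, fun ⟨a, b⟩ => ⟨b, a, le_trans b.le hv.2⟩⟩
    rw [h2, integral_smul_const, ← MeasureTheory.integral_Ioc_eq_integral_Ioo,
      ← intervalIntegral.integral_of_le hv.1.le]
  rw [← hL, ← hR]
  exact key

-- step: the exponential primitive
lemma exp_prim (α s v : ℝ) :
    (∫ u in s..v, α * Real.exp (-α * u)) = Real.exp (-α * s) - Real.exp (-α * v) := by
  have hder : ∀ x ∈ Set.uIcc s v,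
      HasDerivAt (fun u => -Real.exp (-α * u)) (α * Real.exp (-α * x)) x := by
    intro x _
    have h1 : HasDerivAt (fun u : ℝ => -α * u) (-α) x := by
      simpa using (hasDerivAt_id x).const_mul (-α)
    have : HasDerivAt (fun u => -Real.exp (-α * u)) (-(Real.exp (-α * x) * -α)) x := (h1.exp).neg
    convert this using 1
    ring
  have hcont : IntervalIntegrable (fun x => α * Real.exp (-α * x)) volume s v :=
    (Continuous.intervalIntegrable (by fun_prop) s v)
  have := intervalIntegral.integral_eq_sub_of_hasDerivAt hder hcont
  rw [this]; ring

-- the key integration-by-parts identity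
lemma ibp (α s : ℝ) (hs : s ≤ 1)
    (P : ℝ → E) (hP : IntegrableOn P (Set.Ioc s 1))
    (hf : IntegrableOn (fun u => Real.exp (-α * u) • P u) (Set.Ioc s 1)) :
    (∫ u in s..(1:ℝ), Real.exp (-α * u) • P u)
      = Real.exp (-α * s) • (∫ v in s..(1:ℝ), P v)
        - ∫ u in s..(1:ℝ), (α * Real.exp (-α * u)) • (∫ v in u..(1:ℝ), P v) := by
  have hswap := tri_swap s hs (fun u => α * Real.exp (-α * u)) (by fun_prop) P hP
  rw [hswap]
  have : ∀ v : ℝ, (∫ u in s..v, α * Real.exp (-α * u)) • P v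
      = Real.exp (-α * s) • P v - Real.exp (-α * v) • P v := by
    intro v; rw [exp_prim, sub_smul]
  simp_rw [this]
  have hsub := MeasureTheory.integral_sub
    (μ := volume.restrict (Set.Ioc s 1))
    (f := fun v => Real.exp (-α * s) • P v) (g := fun v => Real.exp (-α * v) • P v)
    (hP.smul (Real.exp (-α * s))) hf
  rw [hsub]
  rw [MeasureTheory.integral_smul, ← intervalIntegral.integral_of_le hs,
    ← intervalIntegral.integral_of_le hs]
  abel


set_option maxHeartbeats 1000000 in
/-- Estimate (29): `∫_0^1 |∫_s^1 e^{-αu} P_u du|² ds ≤ 2(1+α²) ∫_0^1 |∫_s^1 P_v dv|² ds`. -/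
theorem stmt_9 {n : ℕ} (hn : 1 ≤ n) (α : ℝ) (hα : 0 ≤ α)
    (P : ℝ → EuclideanSpace ℝ (Fin n))
    (hP : IntegrableOn P (Set.Icc 0 1)) :
    (∫ s in (0:ℝ)..1, ‖∫ u in s..(1:ℝ), Real.exp (-α * u) • P u‖^2) ≤
      2 * (1 + α^2) * ∫ s in (0:ℝ)..1, ‖∫ v in s..(1:ℝ), P v‖^2 := by
  have h01 : (0:ℝ) ≤ 1 := by norm_num
  set Q : ℝ → EuclideanSpace ℝ (Fin n) := fun s => ∫ v in s..(1:ℝ), P v with hQdef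
  set F : ℝ → EuclideanSpace ℝ (Fin n) :=
    fun s => ∫ u in s..(1:ℝ), Real.exp (-α * u) • P u with hFdef
  have hexp_le : ∀ u : ℝ, 0 ≤ u → Real.exp (-α * u) ≤ 1 := by
    intro u hu
    calc Real.exp (-α * u) ≤ Real.exp 0 := Real.exp_le_exp.mpr (by nlinarith)
      _ = 1 := Real.exp_zero
  have hfm : AEStronglyMeasurable (fun u => Real.exp (-α * u) • P u)
      (volume.restrict (Set.Icc (0:ℝ) 1)) :=
    (Continuous.aestronglyMeasurable (f := fun u : ℝ => Real.exp (-α * u)) (by fun_prop)).smul hP.aestronglyMeasurable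
  have hf : IntegrableOn (fun u => Real.exp (-α * u) • P u) (Set.Icc (0:ℝ) 1) := by
    refine Integrable.mono' hP.norm hfm ?_
    filter_upwards [ae_restrict_mem measurableSet_Icc] with u hu
    rw [norm_smul, Real.norm_eq_abs, abs_of_pos (Real.exp_pos _)]
    nlinarith [norm_nonneg (P u), hexp_le u hu.1, Real.exp_pos (-α * u)]
  have hQc : ContinuousOn Q (Set.Icc (0:ℝ) 1) := by
    have := intervalIntegral.continuousOn_primitive_interval_left (a := (0:ℝ)) (b := 1)
      (μ := volume) (f := P) (by rwa [Set.uIcc_of_le h01])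
    rwa [Set.uIcc_of_le h01] at this
  have hFc : ContinuousOn F (Set.Icc (0:ℝ) 1) := by
    have := intervalIntegral.continuousOn_primitive_interval_left (a := (0:ℝ)) (b := 1)
      (μ := volume) (f := fun u => Real.exp (-α * u) • P u) (by rwa [Set.uIcc_of_le h01])
    rwa [Set.uIcc_of_le h01] at this
  set C : ℝ := ∫ u in (0:ℝ)..1, ‖Q u‖ with hCdef
  set D : ℝ := ∫ u in (0:ℝ)..1, ‖Q u‖^2 with hDdef
  have hQni : IntervalIntegrable (fun u => ‖Q u‖) volume 0 1 :=
    ContinuousOn.intervalIntegrable (by rw [Set.uIcc_of_le h01]; exact hQc.norm)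
  have hQ2i : IntervalIntegrable (fun u => ‖Q u‖^2) volume 0 1 :=
    ContinuousOn.intervalIntegrable (by rw [Set.uIcc_of_le h01]; exact (hQc.norm).pow 2)
  have hF2i : IntervalIntegrable (fun s => ‖F s‖^2) volume 0 1 :=
    ContinuousOn.intervalIntegrable (by rw [Set.uIcc_of_le h01]; exact (hFc.norm).pow 2)
  have hC0 : 0 ≤ C := intervalIntegral.integral_nonneg h01 (fun u _ => norm_nonneg _)
  -- Cauchy–Schwarz : C ^ 2 ≤ D
  have hCS : C^2 ≤ D := by
    set μ1 := volume.restrict (Set.Ioc (0:ℝ) 1) with hμ1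
    have hmeas : (μ1 Set.univ).toReal = 1 := by
      simp [hμ1, Real.volume_Ioc]
    have hqi : Integrable (fun u => ‖Q u‖) μ1 :=
      (intervalIntegrable_iff_integrableOn_Ioc_of_le h01).mp hQni
    have hq2i : Integrable (fun u => ‖Q u‖^2) μ1 :=
      (intervalIntegrable_iff_integrableOn_Ioc_of_le h01).mp hQ2i
    have hCset : C = ∫ u, ‖Q u‖ ∂μ1 := intervalIntegral.integral_of_le h01
    have hDset : D = ∫ u, ‖Q u‖^2 ∂μ1 := intervalIntegral.integral_of_le h01
    have h0 : 0 ≤ ∫ u, (‖Q u‖ - C)^2 ∂μ1 := integral_nonneg (fun u => sq_nonneg _)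
    have hexp : ∫ u, (‖Q u‖ - C)^2 ∂μ1 = D - 2*C*C + C^2 := by
      have heq : (fun u => (‖Q u‖ - C)^2) = fun u => (‖Q u‖^2 - (2*C) * ‖Q u‖) + C^2 := by
        funext u; ring
      rw [heq, MeasureTheory.integral_add
          (f := fun u => ‖Q u‖^2 - (2*C) * ‖Q u‖) (g := fun _ => C^2)
          (hq2i.sub (hqi.const_mul (2*C))) (integrable_const _),
        MeasureTheory.integral_sub (f := fun u => ‖Q u‖^2) (g := fun u => (2*C) * ‖Q u‖)
          hq2i (hqi.const_mul (2*C)),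
        MeasureTheory.integral_const_mul, MeasureTheory.integral_const, measureReal_def, hmeas, ← hCset, ← hDset]
      simp only [smul_eq_mul, one_mul]
      try ring
    nlinarith [h0, hexp]
  -- pointwise bound
  have hbound : ∀ s ∈ Set.Icc (0:ℝ) 1, ‖F s‖^2 ≤ 2*‖Q s‖^2 + 2*α^2*C^2 := by
    intro s hs
    have hsub : Set.uIcc s 1 ⊆ Set.Icc (0:ℝ) 1 := by
      rw [Set.uIcc_of_le hs.2]; exact fun x hx => ⟨le_trans hs.1 hx.1, hx.2⟩
    have hP' : IntegrableOn P (Set.Ioc s 1) :=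
      hP.mono (fun x hx => ⟨le_trans hs.1 hx.1.le, hx.2⟩) le_rfl
    have hf' : IntegrableOn (fun u => Real.exp (-α * u) • P u) (Set.Ioc s 1) :=
      hf.mono (fun x hx => ⟨le_trans hs.1 hx.1.le, hx.2⟩) le_rfl
    have hid : F s = Real.exp (-α * s) • Q s
        - ∫ u in s..(1:ℝ), (α * Real.exp (-α * u)) • Q u := ibp α s hs.2 P hP' hf'
    have hGc : ContinuousOn (fun u => (α * Real.exp (-α * u)) • Q u) (Set.uIcc s 1) :=
      ContinuousOn.smul (Continuous.continuousOn (f := fun u : ℝ => α * Real.exp (-α * u)) (by fun_prop)) (hQc.mono hsub)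
    have hαQi : IntervalIntegrable (fun u => α * ‖Q u‖) volume s 1 := by
      refine (hQni.const_mul α).mono_set ?_
      rw [Set.uIcc_of_le hs.2, Set.uIcc_of_le h01]
      exact Set.Icc_subset_Icc hs.1 le_rfl
    have hGn : ‖∫ u in s..(1:ℝ), (α * Real.exp (-α * u)) • Q u‖ ≤ α * C := by
      refine le_trans (intervalIntegral.norm_integral_le_integral_norm hs.2) ?_
      have step1 : (∫ u in s..(1:ℝ), ‖(α * Real.exp (-α * u)) • Q u‖)
          ≤ ∫ u in s..(1:ℝ), α * ‖Q u‖ := by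
        refine intervalIntegral.integral_mono_on hs.2
          (hGc.norm.intervalIntegrable) hαQi ?_
        intro u hu
        rw [norm_smul, Real.norm_eq_abs,
          abs_of_nonneg (mul_nonneg hα (Real.exp_pos _).le)]
        have h1 : Real.exp (-α * u) ≤ 1 := hexp_le u (le_trans hs.1 hu.1)
        nlinarith [mul_nonneg (mul_nonneg hα (sub_nonneg.mpr h1)) (norm_nonneg (Q u))]
      refine le_trans step1 ?_
      rw [intervalIntegral.integral_const_mul]
      refine mul_le_mul_of_nonneg_left ?_ hα
      exact intervalIntegral.integral_mono_interval hs.1 hs.2 le_rfl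
        (Filter.Eventually.of_forall (fun u => norm_nonneg _)) hQni
    have hnorm1 : ‖F s‖ ≤ ‖Q s‖ + α * C := by
      rw [hid]
      refine le_trans (norm_sub_le _ _) (add_le_add ?_ hGn)
      rw [norm_smul, Real.norm_eq_abs, abs_of_pos (Real.exp_pos _)]
      exact mul_le_of_le_one_left (norm_nonneg _) (hexp_le s hs.1)
    have hsq : ‖F s‖^2 ≤ (‖Q s‖ + α * C)^2 :=
      pow_le_pow_left₀ (norm_nonneg _) hnorm1 2
    nlinarith [sq_nonneg (‖Q s‖ - α * C)]
  have hRHSi : IntervalIntegrable (fun s => 2*‖Q s‖^2 + 2*α^2*C^2) volume 0 1 :=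
    (hQ2i.const_mul 2).add intervalIntegrable_const
  show (∫ s in (0:ℝ)..1, ‖F s‖^2) ≤ 2 * (1 + α^2) * ∫ s in (0:ℝ)..1, ‖Q s‖^2
  calc (∫ s in (0:ℝ)..1, ‖F s‖^2)
      ≤ ∫ s in (0:ℝ)..1, (2*‖Q s‖^2 + 2*α^2*C^2) :=
        intervalIntegral.integral_mono_on h01 hF2i hRHSi hbound
    _ = 2*D + 2*α^2*C^2 := by
        rw [intervalIntegral.integral_add (hQ2i.const_mul 2) intervalIntegrable_const,
          intervalIntegral.integral_const_mul, intervalIntegral.integral_const, ← hDdef]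
        simp
    _ ≤ 2 * (1 + α^2) * D := by
        nlinarith [mul_le_mul_of_nonneg_left hCS (sq_nonneg α)]
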